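/- arXiv:2502.03215 — 2 statements merged into one kernel-verified Lean document; each statement's English description precedes it below -/
import Mathlib

section
/- Let T be a finite tree with n vertices. Then the kernel B_T of the Lie algebra homomorphism χ : L_T → k sending every generator (vertex) to 1, where L_T is the graph Lie algebra of T over a field k, is a free Lie algebra of rank n − 1. -/
set_option linter.unusedSectionVars false
set_option maxHeartbeats 1000000

open SimpleGraph FreeLieAlgebra

/-! ### "Dual numbers" Lie algebra `L ⊕ L`, used to build derivations. -/

def TDer (L : Type) : Type := L × L

namespace TDer

variable {R L : Type} [CommRing R] [LieRing L] [LieAlgebra R L]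

def mk' (x m : L) : TDer L := ((x, m) : L × L)
def c1 (z : TDer L) : L := (z : L × L).1
def c2 (z : TDer L) : L := (z : L × L).2

instance instAG : AddCommGroup (TDer L) := inferInstanceAs (AddCommGroup (L × L))
instance instMod : Module R (TDer L) := inferInstanceAs (Module R (L × L))

theorem ext {z w : TDer L} (h1 : c1 z = c1 w) (h2 : c2 z = c2 w) : z = w :=
  Prod.ext h1 h2

instance instBr : Bracket (TDer L) (TDer L) :=
  ⟨fun z w => mk' ⁅c1 z, c1 w⁆ (⁅c1 z, c2 w⁆ + ⁅c2 z, c1 w⁆)⟩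

instance instLR : LieRing (TDer L) :=
  { instAG, (instBr (L := L)) with
    add_lie := fun x y z => by
      refine ext ?_ ?_
      · show ⁅c1 x + c1 y, c1 z⁆ = ⁅c1 x, c1 z⁆ + ⁅c1 y, c1 z⁆
        rw [add_lie]
      · show ⁅c1 x + c1 y, c2 z⁆ + ⁅c2 x + c2 y, c1 z⁆ =
          (⁅c1 x, c2 z⁆ + ⁅c2 x, c1 z⁆) + (⁅c1 y, c2 z⁆ + ⁅c2 y, c1 z⁆)
        simp only [add_lie]; abel
    lie_add := fun x y z => by
      refine ext ?_ ?_
      · show ⁅c1 x, c1 y + c1 z⁆ = ⁅c1 x, c1 y⁆ + ⁅c1 x, c1 z⁆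
        rw [lie_add]
      · show ⁅c1 x, c2 y + c2 z⁆ + ⁅c2 x, c1 y + c1 z⁆ =
          (⁅c1 x, c2 y⁆ + ⁅c2 x, c1 y⁆) + (⁅c1 x, c2 z⁆ + ⁅c2 x, c1 z⁆)
        simp only [lie_add]; abel
    lie_self := fun x => by
      refine ext ?_ ?_
      · show ⁅c1 x, c1 x⁆ = (0 : L); simp
      · show ⁅c1 x, c2 x⁆ + ⁅c2 x, c1 x⁆ = (0 : L)
        rw [← lie_skew (c1 x) (c2 x)]; abel
    leibniz_lie := fun x y z => by
      refine ext ?_ ?_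
      · show ⁅c1 x, ⁅c1 y, c1 z⁆⁆ = ⁅⁅c1 x, c1 y⁆, c1 z⁆ + ⁅c1 y, ⁅c1 x, c1 z⁆⁆
        exact leibniz_lie _ _ _
      · show ⁅c1 x, ⁅c1 y, c2 z⁆ + ⁅c2 y, c1 z⁆⁆ + ⁅c2 x, ⁅c1 y, c1 z⁆⁆ =
          (⁅⁅c1 x, c1 y⁆, c2 z⁆ + ⁅⁅c1 x, c2 y⁆ + ⁅c2 x, c1 y⁆, c1 z⁆) +
          (⁅c1 y, ⁅c1 x, c2 z⁆ + ⁅c2 x, c1 z⁆⁆ + ⁅c2 y, ⁅c1 x, c1 z⁆⁆)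
        simp only [lie_add, add_lie, lie_lie]; abel }

@[simp] theorem c1_mk' (x m : L) : c1 (mk' x m) = x := rfl
@[simp] theorem c2_mk' (x m : L) : c2 (mk' x m) = m := rfl
@[simp] theorem c1_add (z w : TDer L) : c1 (z + w) = c1 z + c1 w := rfl
@[simp] theorem c2_add (z w : TDer L) : c2 (z + w) = c2 z + c2 w := rfl
@[simp] theorem c1_smul (t : R) (z : TDer L) : c1 (t • z) = t • c1 z := rfl
@[simp] theorem c2_smul (t : R) (z : TDer L) : c2 (t • z) = t • c2 z := rfl
@[simp] theorem c1_bracket (z w : TDer L) : c1 ⁅z, w⁆ = ⁅c1 z, c1 w⁆ := rfl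
@[simp] theorem c2_bracket (z w : TDer L) : c2 ⁅z, w⁆ = ⁅c1 z, c2 w⁆ + ⁅c2 z, c1 w⁆ := rfl

instance instLA : LieAlgebra R (TDer L) :=
  { (instMod (R := R) (L := L)) with
    lie_smul := fun t x y => by
      refine ext ?_ ?_
      · show ⁅c1 x, t • c1 y⁆ = t • ⁅c1 x, c1 y⁆; simp
      · show ⁅c1 x, t • c2 y⁆ + ⁅c2 x, t • c1 y⁆ = t • (⁅c1 x, c2 y⁆ + ⁅c2 x, c1 y⁆)
        simp [smul_add] }

/-- Projection on the first component, a morphism of Lie algebras. -/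
def fstHom (R L : Type) [CommRing R] [LieRing L] [LieAlgebra R L] :
    TDer L →ₗ⁅R⁆ L where
  toFun := c1
  map_add' _ _ := rfl
  map_smul' _ _ := rfl
  map_lie' := rfl

end TDer

section FreeDer

variable (R : Type) [CommRing R] {X : Type} (f : X → FreeLieAlgebra R X)

/-- Auxiliary map used to construct a derivation on a free Lie algebra. -/
noncomputable def freeDerPhi : FreeLieAlgebra R X →ₗ⁅R⁆ TDer (FreeLieAlgebra R X) :=
  FreeLieAlgebra.lift R fun x => TDer.mk' (of R x) (f x)

theorem c1_freeDerPhi (z : FreeLieAlgebra R X) : TDer.c1 (freeDerPhi R f z) = z := by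
  have h : (TDer.fstHom R (FreeLieAlgebra R X)).comp (freeDerPhi R f) =
      LieHom.id := by
    apply FreeLieAlgebra.hom_ext
    intro x
    simp [freeDerPhi, TDer.fstHom, lift_of_apply]
    rfl
  have h2 := DFunLike.congr_fun h z
  exact h2

/-- The derivation on a free Lie algebra taking prescribed values on generators. -/
noncomputable def freeDer : LieDerivation R (FreeLieAlgebra R X) (FreeLieAlgebra R X) where
  toLinearMap :=
    { toFun := fun z => TDer.c2 (freeDerPhi R f z)
      map_add' := fun x y => by
        show TDer.c2 (freeDerPhi R f (x + y)) = _
        exact (congrArg TDer.c2 ((freeDerPhi R f).map_add x y)).trans (TDer.c2_add _ _)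
      map_smul' := fun t x => by
        show TDer.c2 (freeDerPhi R f (t • x)) = t • TDer.c2 (freeDerPhi R f x)
        exact (congrArg TDer.c2 ((freeDerPhi R f).map_smul t x)).trans (TDer.c2_smul _ _) }
  leibniz' a b := by
    have h2 := congrArg TDer.c2 ((freeDerPhi R f).map_lie (x := a) (y := b))
    simp only [TDer.c2_bracket, c1_freeDerPhi] at h2
    simp only [LinearMap.coe_mk, AddHom.coe_mk]
    rw [h2, ← lie_skew b (TDer.c2 (freeDerPhi R f a)), sub_neg_eq_add]

@[simp] theorem freeDer_of (x : X) : freeDer R f (of R x) = f x := by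
  show TDer.c2 (freeDerPhi R f (of R x)) = f x
  simp [freeDerPhi, lift_of_apply]

end FreeDer

/-! ### Semidirect product `R ⋉_D L` along a derivation `D`. -/

section SDPsec

variable {R L : Type} [CommRing R] [LieRing L] [LieAlgebra R L]

def SDP (R L : Type) [CommRing R] [LieRing L] [LieAlgebra R L]
    (_D : LieDerivation R L L) : Type := R × L

namespace SDP

variable (D : LieDerivation R L L)

def mk' (t : R) (x : L) : SDP R L D := ((t, x) : R × L)
def c1 (z : SDP R L D) : R := (z : R × L).1
def c2 (z : SDP R L D) : L := (z : R × L).2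

instance instAG : AddCommGroup (SDP R L D) := inferInstanceAs (AddCommGroup (R × L))
instance instMod : Module R (SDP R L D) := inferInstanceAs (Module R (R × L))

variable {D}

theorem ext {z w : SDP R L D} (h1 : c1 D z = c1 D w) (h2 : c2 D z = c2 D w) : z = w :=
  Prod.ext h1 h2

variable (D)

instance instBr : Bracket (SDP R L D) (SDP R L D) :=
  ⟨fun z w => mk' D 0 (c1 D z • D (c2 D w) - c1 D w • D (c2 D z) + ⁅c2 D z, c2 D w⁆)⟩

instance instLR : LieRing (SDP R L D) :=
  { (instAG D), (instBr D) with
    add_lie := fun x y z => by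
      refine ext ?_ ?_
      · show (0 : R) = 0 + 0; simp
      · show (c1 D x + c1 D y) • D (c2 D z) - c1 D z • D (c2 D x + c2 D y) +
            ⁅c2 D x + c2 D y, c2 D z⁆ =
            (c1 D x • D (c2 D z) - c1 D z • D (c2 D x) + ⁅c2 D x, c2 D z⁆) +
            (c1 D y • D (c2 D z) - c1 D z • D (c2 D y) + ⁅c2 D y, c2 D z⁆)
        simp only [map_add, add_smul, smul_add, add_lie]; abel
    lie_add := fun x y z => by
      refine ext ?_ ?_
      · show (0 : R) = 0 + 0; simp
      · show c1 D x • D (c2 D y + c2 D z) - (c1 D y + c1 D z) • D (c2 D x) +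
            ⁅c2 D x, c2 D y + c2 D z⁆ =
            (c1 D x • D (c2 D y) - c1 D y • D (c2 D x) + ⁅c2 D x, c2 D y⁆) +
            (c1 D x • D (c2 D z) - c1 D z • D (c2 D x) + ⁅c2 D x, c2 D z⁆)
        simp only [map_add, add_smul, smul_add, lie_add]; abel
    lie_self := fun x => by
      refine ext ?_ ?_
      · show (0 : R) = 0; rfl
      · show c1 D x • D (c2 D x) - c1 D x • D (c2 D x) + ⁅c2 D x, c2 D x⁆ = 0
        simp
    leibniz_lie := fun x y z => by
      refine ext ?_ ?_
      · show (0 : R) = 0 + 0; simp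
      · show c1 D x • D (c1 D y • D (c2 D z) - c1 D z • D (c2 D y) + ⁅c2 D y, c2 D z⁆) -
            (0 : R) • D (c2 D x) +
            ⁅c2 D x, c1 D y • D (c2 D z) - c1 D z • D (c2 D y) + ⁅c2 D y, c2 D z⁆⁆ =
            ((0 : R) • D (c2 D z) -
              c1 D z • D (c1 D x • D (c2 D y) - c1 D y • D (c2 D x) + ⁅c2 D x, c2 D y⁆) +
              ⁅c1 D x • D (c2 D y) - c1 D y • D (c2 D x) + ⁅c2 D x, c2 D y⁆, c2 D z⁆) +
            (c1 D y • D (c1 D x • D (c2 D z) - c1 D z • D (c2 D x) + ⁅c2 D x, c2 D z⁆) -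
              (0 : R) • D (c2 D y) +
              ⁅c2 D y, c1 D x • D (c2 D z) - c1 D z • D (c2 D x) + ⁅c2 D x, c2 D z⁆⁆)
        simp only [map_add, map_sub, map_smul, LieDerivation.apply_lie_eq_add, smul_add,
          smul_sub, smul_smul, zero_smul, zero_sub, sub_zero, zero_add, add_zero, lie_add,
          add_lie, lie_sub, sub_lie, lie_smul, smul_lie, lie_lie, smul_neg, neg_neg, neg_smul,
          one_smul, mul_comm, ← lie_skew (c2 D z) (D (c2 D y)),
          ← lie_skew (c2 D z) (D (c2 D x)), ← lie_skew (c2 D y) (D (c2 D x))]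
        abel }

@[simp] theorem c1_mk' (t : R) (x : L) : c1 D (mk' D t x) = t := rfl
@[simp] theorem c2_mk' (t : R) (x : L) : c2 D (mk' D t x) = x := rfl
@[simp] theorem c1_add (z w : SDP R L D) : c1 D (z + w) = c1 D z + c1 D w := rfl
@[simp] theorem c2_add (z w : SDP R L D) : c2 D (z + w) = c2 D z + c2 D w := rfl
@[simp] theorem c1_sub (z w : SDP R L D) : c1 D (z - w) = c1 D z - c1 D w := rfl
@[simp] theorem c2_sub (z w : SDP R L D) : c2 D (z - w) = c2 D z - c2 D w := rfl
@[simp] theorem c1_zero : c1 D (0 : SDP R L D) = 0 := rfl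
@[simp] theorem c2_zero : c2 D (0 : SDP R L D) = 0 := rfl
@[simp] theorem c1_smul (t : R) (z : SDP R L D) : c1 D (t • z) = t * c1 D z := rfl
@[simp] theorem c2_smul (t : R) (z : SDP R L D) : c2 D (t • z) = t • c2 D z := rfl
@[simp] theorem c1_bracket (z w : SDP R L D) : c1 D ⁅z, w⁆ = 0 := rfl
@[simp] theorem c2_bracket (z w : SDP R L D) :
    c2 D ⁅z, w⁆ = c1 D z • D (c2 D w) - c1 D w • D (c2 D z) + ⁅c2 D z, c2 D w⁆ := rfl

theorem mk'_eq_zero_iff (t : R) (x : L) : mk' D t x = 0 ↔ t = 0 ∧ x = 0 :=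
  Prod.mk_eq_zero

instance instLA : LieAlgebra R (SDP R L D) :=
  { (instMod D) with
    lie_smul := fun t x y => by
      refine ext ?_ ?_
      · show (0 : R) = t * 0; simp
      · show c1 D x • D (t • c2 D y) - (t * c1 D y) • D (c2 D x) + ⁅c2 D x, t • c2 D y⁆ =
            t • (c1 D x • D (c2 D y) - c1 D y • D (c2 D x) + ⁅c2 D x, c2 D y⁆)
        simp only [map_smul, smul_add, smul_sub, smul_smul, lie_smul, mul_comm] }

end SDP

end SDPsec

/-! ### The pinned definitions. -/

/-- The defining relations of the graph (RAAG) Lie algebra of `G`. -/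
def raagLieRels (k : Type) [Field k] {V : Type} (G : SimpleGraph V) :
    Set (FreeLieAlgebra k V) :=
  {x | ∃ v w, G.Adj v w ∧ x = ⁅FreeLieAlgebra.of k v, FreeLieAlgebra.of k w⁆}

/-- The graph (RAAG) Lie algebra of `G` over `k`: the free Lie algebra on the
vertices modulo the brackets of adjacent vertices. -/
noncomputable def LieRAAG (k : Type) [Field k] {V : Type} (G : SimpleGraph V) : Type :=
  FreeLieAlgebra k V ⧸ LieSubmodule.lieSpan k (FreeLieAlgebra k V) (raagLieRels k G)

noncomputable instance (k : Type) [Field k] {V : Type} (G : SimpleGraph V) :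
    LieRing (LieRAAG k G) := by unfold LieRAAG; infer_instance

noncomputable instance (k : Type) [Field k] {V : Type} (G : SimpleGraph V) :
    LieAlgebra k (LieRAAG k G) := by unfold LieRAAG; infer_instance

/-- The generator of the graph Lie algebra corresponding to a vertex. -/
noncomputable def LieRAAG.gen (k : Type) [Field k] {V : Type} (G : SimpleGraph V) (v : V) :
    LieRAAG k G :=
  LieSubmodule.Quotient.mk
    (N := LieSubmodule.lieSpan k (FreeLieAlgebra k V) (raagLieRels k G))
    (FreeLieAlgebra.of k v)

/-! ### Basic API for `LieRAAG`. -/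

section RaagAPI

variable (k : Type) [Field k] {V : Type} (G : SimpleGraph V)

/-- The quotient map onto the graph Lie algebra, as a morphism of Lie algebras. -/
noncomputable def raagMk : FreeLieAlgebra k V →ₗ⁅k⁆ LieRAAG k G where
  toLinearMap := (LieSubmodule.lieSpan k (FreeLieAlgebra k V) (raagLieRels k G)).toSubmodule.mkQ
  map_lie' := rfl

theorem raagMk_surjective : Function.Surjective (raagMk k G) :=
  Submodule.Quotient.mk_surjective _

theorem raagMk_of (v : V) : raagMk k G (FreeLieAlgebra.of k v) = LieRAAG.gen k G v := rfl

theorem gen_bracket_adj {v w : V} (h : G.Adj v w) :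
    ⁅LieRAAG.gen k G v, LieRAAG.gen k G w⁆ = 0 := by
  rw [← raagMk_of, ← raagMk_of, ← (raagMk k G).map_lie]
  show LieSubmodule.Quotient.mk
    (N := LieSubmodule.lieSpan k (FreeLieAlgebra k V) (raagLieRels k G)) _ = 0
  rw [LieSubmodule.Quotient.mk_eq_zero']
  exact LieSubmodule.subset_lieSpan ⟨v, w, h, rfl⟩

variable {k G}

theorem raag_hom_ext {M : Type} [LieRing M] [LieAlgebra k M]
    {f g : LieRAAG k G →ₗ⁅k⁆ M}
    (h : ∀ v, f (LieRAAG.gen k G v) = g (LieRAAG.gen k G v)) : f = g := by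
  have h2 : f.comp (raagMk k G) = g.comp (raagMk k G) :=
    FreeLieAlgebra.hom_ext fun v => by
      simpa [LieHom.comp_apply, raagMk_of] using h v
  refine DFunLike.ext f g fun x => ?_
  obtain ⟨y, rfl⟩ := raagMk_surjective k G x
  exact DFunLike.congr_fun h2 y

/-- Lifting a morphism that kills the relations to the quotient. -/
noncomputable def raagLift {M : Type} [LieRing M] [LieAlgebra k M]
    (γ : FreeLieAlgebra k V →ₗ⁅k⁆ M) (hγ : ∀ x ∈ raagLieRels k G, γ x = 0) :
    LieRAAG k G →ₗ⁅k⁆ M where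
  toLinearMap :=
    Submodule.liftQ (LieSubmodule.lieSpan k (FreeLieAlgebra k V)
        (raagLieRels k G)).toSubmodule γ.toLinearMap (by
      have hle : LieSubmodule.lieSpan k (FreeLieAlgebra k V) (raagLieRels k G) ≤ γ.ker :=
        (LieSubmodule.lieSpan_le).mpr fun x hx => by exact LieHom.mem_ker.mpr (hγ x hx)
      intro x hx
      exact LieHom.mem_ker.mp (hle hx))
  map_lie' := by
    intro x y
    obtain ⟨x, rfl⟩ := raagMk_surjective k G x
    obtain ⟨y, rfl⟩ := raagMk_surjective k G y
    rw [← (raagMk k G).map_lie]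
    show Submodule.liftQ _ _ _ (Submodule.Quotient.mk _) =
      ⁅Submodule.liftQ _ _ _ (Submodule.Quotient.mk _),
       Submodule.liftQ _ _ _ (Submodule.Quotient.mk _)⁆
    exact γ.map_lie x y

theorem raagLift_gen {M : Type} [LieRing M] [LieAlgebra k M]
    (γ : FreeLieAlgebra k V →ₗ⁅k⁆ M) (hγ : ∀ x ∈ raagLieRels k G, γ x = 0) (v : V) :
    raagLift γ hγ (LieRAAG.gen k G v) = γ (FreeLieAlgebra.of k v) := rfl

end RaagAPI

/-! ### Sums of brackets along walks in a graph. -/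

def wsum {V L : Type} [LieRing L] (a : V → L) {G : SimpleGraph V} :
    {v w : V} → G.Walk v w → L
  | _, _, SimpleGraph.Walk.nil => 0
  | _, _, @SimpleGraph.Walk.cons _ _ u x _ _ q => ⁅a u, a x⁆ + wsum a q

@[simp] theorem wsum_nil {V L : Type} [LieRing L] (a : V → L) {G : SimpleGraph V} {v : V} :
    wsum a (SimpleGraph.Walk.nil : G.Walk v v) = 0 := rfl

@[simp] theorem wsum_cons {V L : Type} [LieRing L] (a : V → L) {G : SimpleGraph V}
    {u x w : V} (h : G.Adj u x) (q : G.Walk x w) :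
    wsum a (SimpleGraph.Walk.cons h q) = ⁅a u, a x⁆ + wsum a q := rfl

section Tree

variable {V : Type} {T : SimpleGraph V}

/-- The unique path from `v` to `r` in a tree. -/
noncomputable def treePath (ht : T.IsTree) (r v : V) : T.Walk v r :=
  (ht.existsUnique_path v r).choose

theorem treePath_isPath (ht : T.IsTree) (r v : V) : (treePath ht r v).IsPath :=
  (ht.existsUnique_path v r).choose_spec.1

theorem treePath_unique (ht : T.IsTree) (r v : V) (q : T.Walk v r) (hq : q.IsPath) :
    q = treePath ht r v :=
  (ht.existsUnique_path v r).choose_spec.2 q hq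

variable (k : Type) [Field k]

/-- Degree-one generators: `a v = u_v` for `v ≠ r` and `a r = 0`. -/
noncomputable def treeA [DecidableEq V] (r : V) (v : V) : FreeLieAlgebra k {v : V // v ≠ r} :=
  if h : v = r then 0 else FreeLieAlgebra.of k ⟨v, h⟩

/-- The prescribed values of the derivation. -/
noncomputable def treeD [DecidableEq V] (ht : T.IsTree) (r : V) (v : V) :
    FreeLieAlgebra k {v : V // v ≠ r} :=
  wsum (treeA k r) (treePath ht r v)

theorem treeD_r [DecidableEq V] (ht : T.IsTree) (r : V) : treeD k ht r r = 0 := by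
  have h : (SimpleGraph.Walk.nil : T.Walk r r) = treePath ht r r :=
    treePath_unique ht r r _ SimpleGraph.Walk.IsPath.nil
  rw [treeD, ← h, wsum_nil]

theorem treeD_edge [DecidableEq V] (ht : T.IsTree) (r : V) {v w : V} (h : T.Adj v w) :
    treeD k ht r w - treeD k ht r v = ⁅treeA k r w, treeA k r v⁆ := by
  by_cases hv : v ∈ (treePath ht r w).support
  · have hq : ((treePath ht r w).dropUntil v hv).IsPath :=
      (treePath_isPath ht r w).dropUntil hv
    have hqd : (treePath ht r w).dropUntil v hv = treePath ht r v :=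
      treePath_unique ht r v _ hq
    have hwns : w ∉ ((treePath ht r w).dropUntil v hv).support := by
      intro hw
      have hnd : (((treePath ht r w).takeUntil v hv).append
          ((treePath ht r w).dropUntil v hv)).support.Nodup := by
        rw [(treePath ht r w).take_spec hv]
        exact (treePath_isPath ht r w).support_nodup
      rw [SimpleGraph.Walk.support_append] at hnd
      have hw1 : w ∈ ((treePath ht r w).takeUntil v hv).support :=
        SimpleGraph.Walk.start_mem_support _
      have hw2 : w ∈ ((treePath ht r w).dropUntil v hv).support.tail := by
        rw [SimpleGraph.Walk.support_eq_cons] at hw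
        rcases List.mem_cons.mp hw with h1 | h1
        · exact absurd h1.symm h.ne
        · exact h1
      exact List.disjoint_of_nodup_append hnd hw1 hw2
    have hcons : (SimpleGraph.Walk.cons h.symm
        ((treePath ht r w).dropUntil v hv)).IsPath := hq.cons hwns
    have hpc : SimpleGraph.Walk.cons h.symm ((treePath ht r w).dropUntil v hv) =
        treePath ht r w := treePath_unique ht r w _ hcons
    have : treeD k ht r w = ⁅treeA k r w, treeA k r v⁆ + treeD k ht r v := by
      rw [treeD, ← hpc, wsum_cons, hqd]; rfl
    rw [this]; abel
  · have hcons : (SimpleGraph.Walk.cons h (treePath ht r w)).IsPath :=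
      (treePath_isPath ht r w).cons hv
    have hpc : SimpleGraph.Walk.cons h (treePath ht r w) = treePath ht r v :=
      treePath_unique ht r v _ hcons
    have : treeD k ht r v = ⁅treeA k r v, treeA k r w⁆ + treeD k ht r w := by
      rw [treeD, ← hpc, wsum_cons]; rfl
    rw [this, ← lie_skew (treeA k r v) (treeA k r w)]; abel

end Tree

attribute [local instance 100] LieRing.ofAssociativeRing

/-- for a finite tree `T` with `n` vertices, the Bestvina–Brady Lie
algebra (the kernel of the length character of the graph Lie algebra of `T`) is a
free Lie algebra of rank `n - 1`. -/
theorem stmt13 (k : Type) [Field k] {V : Type} [Fintype V] (T : SimpleGraph V)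
    (htree : T.IsTree) (χ : LieRAAG k T →ₗ⁅k⁆ k)
    (hχ : ∀ v, χ (LieRAAG.gen k T v) = 1) :
    Nonempty (↥χ.ker ≃ₗ⁅k⁆ FreeLieAlgebra k (Fin (Fintype.card V - 1))) := by
  classical
  obtain ⟨r⟩ := htree.isConnected.nonempty
  let W := {v : V // v ≠ r}
  let F := FreeLieAlgebra k W
  let D : LieDerivation k F F := freeDer k fun x : W => treeD k htree r x.1
  have hDa : ∀ v, D (treeA k r v) = treeD k htree r v := by
    intro v
    by_cases hv : v = r
    · rw [hv, show treeA k r r = 0 from dif_pos rfl, map_zero, treeD_r]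
    · rw [show treeA k r v = FreeLieAlgebra.of k (⟨v, hv⟩ : W) from dif_neg hv]
      exact freeDer_of k _ _
  let γ : FreeLieAlgebra k V →ₗ⁅k⁆ SDP k F D :=
    FreeLieAlgebra.lift k fun v => SDP.mk' D 1 (treeA k r v)
  have hγof : ∀ v, γ (FreeLieAlgebra.of k v) = SDP.mk' D 1 (treeA k r v) := fun v =>
    lift_of_apply _ v
  have hrels : ∀ x ∈ raagLieRels k T, γ x = 0 := by
    rintro x ⟨v, w, hadj, rfl⟩
    rw [γ.map_lie, hγof, hγof]
    refine SDP.ext ?_ ?_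
    · simp
    · simp only [SDP.c2_bracket, SDP.c2_zero, SDP.c1_mk', SDP.c2_mk', one_smul, hDa]
      rw [treeD_edge k htree r hadj, ← lie_skew (treeA k r v) (treeA k r w)]
      abel
  let β : LieRAAG k T →ₗ⁅k⁆ SDP k F D := raagLift γ hrels
  have hβgen : ∀ v, β (LieRAAG.gen k T v) = SDP.mk' D 1 (treeA k r v) := fun v => by
    rw [raagLift_gen, hγof]
  let α : F →ₗ⁅k⁆ LieRAAG k T :=
    FreeLieAlgebra.lift k fun x : W => LieRAAG.gen k T x.1 - LieRAAG.gen k T r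
  have hαof : ∀ x : W, α (FreeLieAlgebra.of k x) = LieRAAG.gen k T x.1 - LieRAAG.gen k T r :=
    fun x => lift_of_apply _ x
  have hαa : ∀ v, α (treeA k r v) = LieRAAG.gen k T v - LieRAAG.gen k T r := by
    intro v
    by_cases hv : v = r
    · rw [hv, show treeA k r r = 0 from dif_pos rfl, map_zero α, sub_self]
    · rw [show treeA k r v = FreeLieAlgebra.of k (⟨v, hv⟩ : W) from dif_neg hv, hαof]
  let ι : F →ₗ⁅k⁆ SDP k F D :=
    { toFun := fun x => SDP.mk' D 0 x
      map_add' := fun x y => SDP.ext (by simp) (by simp)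
      map_smul' := fun t x => SDP.ext (by simp) (by simp)
      map_lie' := fun {x y} => SDP.ext (by simp) (by simp) }
  have hβα : β.comp α = ι := by
    refine FreeLieAlgebra.hom_ext fun x => ?_
    rw [LieHom.comp_apply, hαof, map_sub β, hβgen, hβgen]
    show SDP.mk' D 1 (treeA k r x.1) - SDP.mk' D 1 (treeA k r r) = SDP.mk' D 0 (FreeLieAlgebra.of k x)
    rw [show treeA k r (x.1) = FreeLieAlgebra.of k x from dif_neg x.2,
      show treeA k r r = 0 from dif_pos rfl]
    exact SDP.ext (by simp) (by simp)
  have hαinj : Function.Injective α := by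
    intro x y hxy
    have e1 := DFunLike.congr_fun hβα x
    have e2 := DFunLike.congr_fun hβα y
    simp only [LieHom.comp_apply] at e1 e2
    have h3 : ι x = ι y := by rw [← e1, ← e2, hxy]
    have h4 := congrArg (SDP.c2 D) h3
    exact h4
  let χg : SDP k F D →ₗ⁅k⁆ k :=
    { toFun := SDP.c1 D
      map_add' := fun x y => rfl
      map_smul' := fun t x => rfl
      map_lie' := fun {x y} => by
        show SDP.c1 D ⁅x, y⁆ = ⁅SDP.c1 D x, SDP.c1 D y⁆
        rw [SDP.c1_bracket, Ring.lie_def, mul_comm, sub_self] }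
  have hχχg : χ = χg.comp β := by
    refine raag_hom_ext fun v => ?_
    rw [hχ v, LieHom.comp_apply, hβgen]
    rfl
  have hχα : ∀ y, χ (α y) = 0 := by
    have h : χ.comp α = (0 : F →ₗ⁅k⁆ k) := by
      refine FreeLieAlgebra.hom_ext fun x => ?_
      rw [LieHom.comp_apply, hαof, map_sub χ, hχ, hχ, sub_self]
      rfl
    intro y
    have := DFunLike.congr_fun h y
    simpa using this
  have s2 : ∀ v w₀ (p : T.Walk v w₀), ∃ y, α y = ⁅LieRAAG.gen k T v, LieRAAG.gen k T w₀⁆ := by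
    intro v w₀ p
    induction p with
    | nil => exact ⟨0, by rw [map_zero α, lie_self]⟩
    | @cons u x w₁ hadj q ih =>
      obtain ⟨y, hy⟩ := ih
      refine ⟨⁅treeA k r u - treeA k r x, treeA k r w₁ - treeA k r x⁆ + y, ?_⟩
      rw [map_add α, α.map_lie, map_sub α, map_sub α, hαa, hαa, hαa, hy]
      have h0 : ⁅LieRAAG.gen k T u, LieRAAG.gen k T x⁆ = 0 := gen_bracket_adj k T hadj
      simp only [sub_sub_sub_cancel_right, lie_sub, sub_lie, h0, lie_self, sub_zero, zero_sub,
        sub_self]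
      abel
  have hPtop : ∀ y : F, ∀ v, ∃ z, α z = ⁅LieRAAG.gen k T v, α y⁆ := by
    let P : LieSubalgebra k F :=
      { carrier := {y : F | ∀ v, ∃ z, α z = ⁅LieRAAG.gen k T v, α y⁆}
        add_mem' := by
          intro y y' hy hy' v
          obtain ⟨z, hz⟩ := hy v
          obtain ⟨z', hz'⟩ := hy' v
          exact ⟨z + z', by rw [map_add α, map_add α, lie_add, hz, hz']⟩
        zero_mem' := fun v => ⟨0, by rw [map_zero α, lie_zero]⟩
        smul_mem' := by
          intro t y hy v
          obtain ⟨z, hz⟩ := hy v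
          exact ⟨t • z, by rw [map_smul α, map_smul α, lie_smul, hz]⟩
        lie_mem' := by
          intro x y hx hy v
          obtain ⟨z, hz⟩ := hx v
          obtain ⟨z', hz'⟩ := hy v
          refine ⟨⁅z, y⁆ + ⁅x, z'⁆, ?_⟩
          rw [map_add α, α.map_lie z y, α.map_lie x z', hz, hz', α.map_lie x y,
            leibniz_lie (LieRAAG.gen k T v) (α x) (α y)] }
    have hPgen : ∀ x : W, FreeLieAlgebra.of k x ∈ P := by
      intro x v
      obtain ⟨y2, hy2⟩ := s2 x.1 r (treePath htree r x.1)
      refine ⟨⁅treeA k r v - treeA k r x.1, FreeLieAlgebra.of k x⁆ - y2, ?_⟩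
      rw [map_sub α, α.map_lie, map_sub α, hαa, hαa, hy2, hαof]
      simp only [sub_sub_sub_cancel_right, lie_sub, sub_lie, lie_self, sub_zero, zero_sub,
        sub_self]
      abel
    let h : F →ₗ⁅k⁆ P := FreeLieAlgebra.lift k fun x => ⟨FreeLieAlgebra.of k x, hPgen x⟩
    have hc : P.incl.comp h = LieHom.id := by
      refine FreeLieAlgebra.hom_ext fun x => ?_
      rw [LieHom.comp_apply, lift_of_apply]
      rfl
    intro y
    have hy : P.incl (h y) = y := by
      have := DFunLike.congr_fun hc y
      simpa using this
    have hmem : y ∈ P := hy ▸ (h y).2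
    exact hmem
  have hQtop : ∀ x : LieRAAG k T, ∃ (c : k) (y : F), x = c • LieRAAG.gen k T r + α y := by
    let Q : LieSubalgebra k (LieRAAG k T) :=
      { carrier := {x | ∃ (c : k) (y : F), x = c • LieRAAG.gen k T r + α y}
        add_mem' := by
          rintro x x' ⟨c, y, rfl⟩ ⟨c', y', rfl⟩
          exact ⟨c + c', y + y', by rw [add_smul, map_add α]; abel⟩
        zero_mem' := ⟨0, 0, by rw [zero_smul, map_zero α, add_zero]⟩
        smul_mem' := by
          rintro t x ⟨c, y, rfl⟩
          exact ⟨t * c, t • y, by rw [smul_add, smul_smul, map_smul α]⟩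
        lie_mem' := by
          rintro x x' ⟨c, y, rfl⟩ ⟨c', y', rfl⟩
          obtain ⟨z, hz⟩ := hPtop y' r
          obtain ⟨z', hz'⟩ := hPtop y r
          refine ⟨0, c • z - c' • z' + ⁅y, y'⁆, ?_⟩
          rw [zero_smul, zero_add, map_add α, map_sub α, map_smul α, map_smul α, α.map_lie,
            hz, hz']
          simp only [lie_add, add_lie, lie_smul, smul_lie, lie_self, smul_zero, smul_smul,
            zero_add, add_zero, ← lie_skew (α y) (LieRAAG.gen k T r), smul_neg]
          abel }
    have hQgen : ∀ v, LieRAAG.gen k T v ∈ Q := fun v =>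
      ⟨1, treeA k r v, by rw [one_smul, hαa]; abel⟩
    let h : FreeLieAlgebra k V →ₗ⁅k⁆ Q := FreeLieAlgebra.lift k fun v =>
      ⟨LieRAAG.gen k T v, hQgen v⟩
    have hc : Q.incl.comp h = raagMk k T := by
      refine FreeLieAlgebra.hom_ext fun v => ?_
      rw [LieHom.comp_apply, lift_of_apply, raagMk_of]
      rfl
    intro x
    obtain ⟨y0, rfl⟩ := raagMk_surjective k T x
    have hy : Q.incl (h y0) = raagMk k T y0 := by
      have := DFunLike.congr_fun hc y0
      simpa using this
    exact hy ▸ (h y0).2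
  have hsurj : ∀ x ∈ χ.ker, ∃ y, α y = x := by
    intro x hx
    obtain ⟨c, y, rfl⟩ := hQtop x
    have h0 : χ (c • LieRAAG.gen k T r + α y) = c := by
      rw [map_add χ, map_smul χ, hχ, hχα, smul_eq_mul, mul_one, add_zero]
    have hc0 : c = 0 := by rw [← h0]; exact LieHom.mem_ker.mp hx
    rw [hc0, zero_smul, zero_add]
    exact ⟨y, rfl⟩
  have hker : ∀ y, α y ∈ χ.ker := fun y => LieHom.mem_ker.mpr (hχα y)
  let αres : F →ₗ⁅k⁆ ↥χ.ker :=
    { toFun := fun y => ⟨α y, hker y⟩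
      map_add' := fun y y' => Subtype.ext (by show α (y + y') = _; rw [map_add α]; rfl)
      map_smul' := fun t y => Subtype.ext (by show α (t • y) = _; rw [map_smul α]; rfl)
      map_lie' := fun {y y'} => Subtype.ext (by show α ⁅y, y'⁆ = _; rw [α.map_lie]; rfl) }
  have hbij : Function.Bijective αres := by
    constructor
    · intro y y' hyy
      exact hαinj (congrArg Subtype.val hyy)
    · rintro ⟨x, hx⟩
      obtain ⟨y, hy⟩ := hsurj x hx
      exact ⟨y, Subtype.ext hy⟩
  have hcard : Fintype.card W = Fintype.card V - 1 := by
    have h1 := Fintype.card_subtype_compl (fun v : V => v = r)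
    rw [Fintype.card_subtype_eq] at h1
    exact h1.trans rfl
  let e : W ≃ Fin (Fintype.card V - 1) := Fintype.equivFinOfCardEq hcard
  let fwd : F →ₗ⁅k⁆ FreeLieAlgebra k (Fin (Fintype.card V - 1)) :=
    FreeLieAlgebra.lift k fun x => FreeLieAlgebra.of k (e x)
  let bwd : FreeLieAlgebra k (Fin (Fintype.card V - 1)) →ₗ⁅k⁆ F :=
    FreeLieAlgebra.lift k fun i => FreeLieAlgebra.of k (e.symm i)
  have h1 : fwd.comp bwd = LieHom.id := by
    refine FreeLieAlgebra.hom_ext fun i => ?_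
    rw [LieHom.comp_apply, lift_of_apply, lift_of_apply, e.apply_symm_apply]
    rfl
  have h2 : bwd.comp fwd = LieHom.id := by
    refine FreeLieAlgebra.hom_ext fun x => ?_
    rw [LieHom.comp_apply, lift_of_apply, lift_of_apply, e.symm_apply_apply]
    rfl
  have hbij2 : Function.Bijective fwd := by
    refine Function.bijective_iff_has_inverse.mpr ⟨bwd, fun x => ?_, fun x => ?_⟩
    · have := DFunLike.congr_fun h2 x
      simpa using this
    · have := DFunLike.congr_fun h1 x
      simpa using this
  exact ⟨((LieEquiv.ofBijective αres hbij).symm).trans (LieEquiv.ofBijective fwd hbij2)⟩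
end

section
/- Let Γ₁ and Γ₂ be finite connected graphs sharing exactly one common vertex v, and let Γ = Γ₁ ∨_v Γ₂ be their connected sum (union glued at v). Then the Bestvina–Brady group B_Γ decomposes as the free product B_{Γ₁} * B_{Γ₂} of the Bestvina–Brady groups of the two pieces. -/
open SimpleGraph

/-- The defining relations of the right-angled Artin group of `G`. -/
def raagRels {V : Type} (G : SimpleGraph V) : Set (FreeGroup V) :=
  {x | ∃ v w, G.Adj v w ∧
    x = FreeGroup.of v * FreeGroup.of w * (FreeGroup.of v)⁻¹ * (FreeGroup.of w)⁻¹}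

/-- The right-angled Artin group of `G`. -/
def RAAG {V : Type} (G : SimpleGraph V) : Type := PresentedGroup (raagRels G)

instance {V : Type} (G : SimpleGraph V) : Group (RAAG G) := by
  unfold RAAG; infer_instance

/-- The generator of the RAAG corresponding to a vertex. -/
def RAAG.gen {V : Type} (G : SimpleGraph V) (v : V) : RAAG G := PresentedGroup.of v

/-- The cone over a graph `Λ`, with apex `none`. -/
def coneGraph {W : Type} (H : SimpleGraph W) : SimpleGraph (Option W) :=
  SimpleGraph.fromRel (fun a b =>
    a = none ∨ ∃ x y, a = some x ∧ b = some y ∧ H.Adj x y)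

section Aux
variable {V : Type} (G : SimpleGraph V)

lemma gen_comm {a b : V} (h : G.Adj a b) :
    RAAG.gen G a * RAAG.gen G b = RAAG.gen G b * RAAG.gen G a := by
  have h1 : RAAG.gen G a * RAAG.gen G b * (RAAG.gen G a)⁻¹ * (RAAG.gen G b)⁻¹ = 1 := by
    have : (PresentedGroup.mk (raagRels G))
        (FreeGroup.of a * FreeGroup.of b * (FreeGroup.of a)⁻¹ * (FreeGroup.of b)⁻¹) = 1 := by
      refine (QuotientGroup.eq_one_iff _).mpr ?_
      exact Subgroup.subset_normalClosure ⟨a, b, h, rfl⟩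
    simp only [map_mul, map_inv] at this
    exact this
  exact mul_inv_eq_one.mp (by rw [mul_inv_rev, ← mul_assoc]; exact h1)

def raagIncl (s : Set V) : RAAG (G.induce s) →* RAAG G :=
  PresentedGroup.toGroup (f := fun u : s => RAAG.gen G u.1) (by
    rintro r ⟨u, w, huw, rfl⟩
    have hc := gen_comm G (show G.Adj u.1 w.1 from huw)
    simp only [map_mul, map_inv, FreeGroup.lift_apply_of]
    rw [hc]; group)

@[simp] lemma raagIncl_gen (s : Set V) (u : s) :
    raagIncl G s (RAAG.gen (G.induce s) u) = RAAG.gen G u.1 :=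
  PresentedGroup.toGroup.of _

lemma raag_hom_ext_s16 {H : Type} [Group H] {f g : RAAG G →* H}
    (h : ∀ u, f (RAAG.gen G u) = g (RAAG.gen G u)) : f = g := PresentedGroup.ext h

end Aux

open Monoid

section CoprodAut
variable {M N : Type} [Monoid M] [Monoid N]

def coprodAut (e₁ : M ≃* M) (e₂ : N ≃* N) : MulAut (Coprod M N) where
  toFun := Coprod.map e₁.toMonoidHom e₂.toMonoidHom
  invFun := Coprod.map e₁.symm.toMonoidHom e₂.symm.toMonoidHom
  left_inv x := by
    have h : (Coprod.map e₁.symm.toMonoidHom e₂.symm.toMonoidHom).comp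
        (Coprod.map e₁.toMonoidHom e₂.toMonoidHom) = MonoidHom.id _ := by
      rw [Coprod.map_comp_map]
      have h1 : e₁.symm.toMonoidHom.comp e₁.toMonoidHom = MonoidHom.id M := by ext x; simp
      have h2 : e₂.symm.toMonoidHom.comp e₂.toMonoidHom = MonoidHom.id N := by ext x; simp
      rw [h1, h2, Coprod.map_id_id]
    exact DFunLike.congr_fun h x
  right_inv x := by
    have h : (Coprod.map e₁.toMonoidHom e₂.toMonoidHom).comp
        (Coprod.map e₁.symm.toMonoidHom e₂.symm.toMonoidHom) = MonoidHom.id _ := by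
      rw [Coprod.map_comp_map]
      have h1 : e₁.toMonoidHom.comp e₁.symm.toMonoidHom = MonoidHom.id M := by ext x; simp
      have h2 : e₂.toMonoidHom.comp e₂.symm.toMonoidHom = MonoidHom.id N := by ext x; simp
      rw [h1, h2, Coprod.map_id_id]
    exact DFunLike.congr_fun h x
  map_mul' := map_mul _

@[simp] lemma coprodAut_inl (e₁ : M ≃* M) (e₂ : N ≃* N) (x : M) :
    coprodAut e₁ e₂ (Coprod.inl x) = Coprod.inl (e₁ x) := rfl

@[simp] lemma coprodAut_inr (e₁ : M ≃* M) (e₂ : N ≃* N) (x : N) :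
    coprodAut e₁ e₂ (Coprod.inr x) = Coprod.inr (e₂ x) := rfl

def coprodAutHom : MulAut M × MulAut N →* MulAut (Coprod M N) where
  toFun p := coprodAut p.1 p.2
  map_one' := by
    ext x
    exact DFunLike.congr_fun Coprod.map_id_id x
  map_mul' p q := by
    ext x
    have := DFunLike.congr_fun
      (Coprod.map_comp_map (M := M) (N := N)
        p.1.toMonoidHom p.2.toMonoidHom q.1.toMonoidHom q.2.toMonoidHom) x
    exact this.symm

lemma coprodAut_zpow (e₁ : M ≃* M) (e₂ : N ≃* N) (n : ℤ) :
    (coprodAut e₁ e₂) ^ n = coprodAut (e₁ ^ n) (e₂ ^ n) := by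
  have := map_zpow coprodAutHom (e₁, e₂) n
  simpa [coprodAutHom, Prod.pow_def] using this.symm

end CoprodAut

section Main
open Monoid SemidirectProduct Multiplicative
open scoped Classical

variable {V : Type} (G : SimpleGraph V) (s t : Set V) (v : V)
  (χ₁ : RAAG (G.induce s) →* Multiplicative ℤ) (χ₂ : RAAG (G.induce t) →* Multiplicative ℤ)
  (hvs : v ∈ s) (hvt : v ∈ t)
  (hk1 : ∀ u, χ₁ (RAAG.gen (G.induce s) u) = ofAdd 1)
  (hk2 : ∀ u, χ₂ (RAAG.gen (G.induce t) u) = ofAdd 1)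

/-- Helper: differences of generators lie in the kernel. -/
lemma mem_ker_gen {H : Type} [Group H] (χ : H →* Multiplicative ℤ) {ι : Type}
    (g : ι → H) (hk : ∀ u, χ (g u) = ofAdd 1) (a b : ι) : g a * (g b)⁻¹ ∈ χ.ker := by
  rw [MonoidHom.mem_ker, map_mul, map_inv, hk a, hk b, mul_inv_cancel]

/-- The conjugation action of `ℤ` on the coproduct of the two kernels. -/
def bbφ : Multiplicative ℤ →* MulAut (Coprod ↥χ₁.ker ↥χ₂.ker) :=
  zpowersHom _ (coprodAut (MulAut.conjNormal (RAAG.gen (G.induce s) ⟨v, hvs⟩))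
    (MulAut.conjNormal (RAAG.gen (G.induce t) ⟨v, hvt⟩)))

lemma bbφ_inl (g : Multiplicative ℤ) (x : ↥χ₁.ker) :
    bbφ G s t v χ₁ χ₂ hvs hvt g (Coprod.inl x) =
      Coprod.inl (MulAut.conjNormal ((RAAG.gen (G.induce s) ⟨v, hvs⟩) ^ g.toAdd) x) := by
  unfold bbφ
  rw [zpowersHom_apply, coprodAut_zpow, ← map_zpow MulAut.conjNormal, ← map_zpow MulAut.conjNormal,
    coprodAut_inl]

lemma bbφ_inr (g : Multiplicative ℤ) (x : ↥χ₂.ker) :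
    bbφ G s t v χ₁ χ₂ hvs hvt g (Coprod.inr x) =
      Coprod.inr (MulAut.conjNormal ((RAAG.gen (G.induce t) ⟨v, hvt⟩) ^ g.toAdd) x) := by
  unfold bbφ
  rw [zpowersHom_apply, coprodAut_zpow, ← map_zpow MulAut.conjNormal, ← map_zpow MulAut.conjNormal,
    coprodAut_inr]

/-- The map on generators defining `Ψ`. -/
noncomputable def psiFun :
    V → (Coprod ↥χ₁.ker ↥χ₂.ker ⋊[bbφ G s t v χ₁ χ₂ hvs hvt] Multiplicative ℤ) := fun u =>
  if hu : u ∈ s then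
    ⟨Coprod.inl ⟨RAAG.gen (G.induce s) ⟨u, hu⟩ * (RAAG.gen (G.induce s) ⟨v, hvs⟩)⁻¹,
      mem_ker_gen χ₁ _ hk1 ⟨u, hu⟩ ⟨v, hvs⟩⟩, ofAdd 1⟩
  else if hu' : u ∈ t then
    ⟨Coprod.inr ⟨RAAG.gen (G.induce t) ⟨u, hu'⟩ * (RAAG.gen (G.induce t) ⟨v, hvt⟩)⁻¹,
      mem_ker_gen χ₂ _ hk2 ⟨u, hu'⟩ ⟨v, hvt⟩⟩, ofAdd 1⟩
  else 1

lemma psiFun_mem_s {u : V} (hu : u ∈ s) :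
    psiFun G s t v χ₁ χ₂ hvs hvt hk1 hk2 u =
      ⟨Coprod.inl ⟨RAAG.gen (G.induce s) ⟨u, hu⟩ * (RAAG.gen (G.induce s) ⟨v, hvs⟩)⁻¹,
        mem_ker_gen χ₁ _ hk1 ⟨u, hu⟩ ⟨v, hvs⟩⟩, ofAdd 1⟩ := by
  unfold psiFun; rw [dif_pos hu]

lemma psiFun_mem_t (huv : s ∩ t ⊆ {v}) {u : V} (hu : u ∈ t) :
    psiFun G s t v χ₁ χ₂ hvs hvt hk1 hk2 u =
      ⟨Coprod.inr ⟨RAAG.gen (G.induce t) ⟨u, hu⟩ * (RAAG.gen (G.induce t) ⟨v, hvt⟩)⁻¹,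
        mem_ker_gen χ₂ _ hk2 ⟨u, hu⟩ ⟨v, hvt⟩⟩, ofAdd 1⟩ := by
  by_cases h : u ∈ s
  · have huveq : u = v := huv ⟨h, hu⟩
    subst huveq
    rw [psiFun_mem_s G s t u χ₁ χ₂ hvs hvt hk1 hk2 h]
    have e1 : (⟨RAAG.gen (G.induce s) ⟨u, h⟩ * (RAAG.gen (G.induce s) ⟨u, hvs⟩)⁻¹,
        mem_ker_gen χ₁ _ hk1 ⟨u, h⟩ ⟨u, hvs⟩⟩ : ↥χ₁.ker) = 1 := by
      apply Subtype.ext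
      have : (⟨u, h⟩ : ↥s) = ⟨u, hvs⟩ := rfl
      rw [this]
      exact mul_inv_cancel _
    have e2 : (⟨RAAG.gen (G.induce t) ⟨u, hu⟩ * (RAAG.gen (G.induce t) ⟨u, hvt⟩)⁻¹,
        mem_ker_gen χ₂ _ hk2 ⟨u, hu⟩ ⟨u, hvt⟩⟩ : ↥χ₂.ker) = 1 := by
      apply Subtype.ext
      have : (⟨u, hu⟩ : ↥t) = ⟨u, hvt⟩ := rfl
      rw [this]
      exact mul_inv_cancel _
    rw [e1, e2]
    congr 1
    rw [map_one, map_one]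
  · unfold psiFun; rw [dif_neg h, dif_pos hu]

lemma psiFun_v :
    psiFun G s t v χ₁ χ₂ hvs hvt hk1 hk2 v = ⟨1, ofAdd 1⟩ := by
  rw [psiFun_mem_s G s t v χ₁ χ₂ hvs hvt hk1 hk2 hvs]
  have e1 : (⟨RAAG.gen (G.induce s) ⟨v, hvs⟩ * (RAAG.gen (G.induce s) ⟨v, hvs⟩)⁻¹,
      mem_ker_gen χ₁ _ hk1 ⟨v, hvs⟩ ⟨v, hvs⟩⟩ : ↥χ₁.ker) = 1 :=
    Subtype.ext (mul_inv_cancel _)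
  rw [e1]
  congr 1
  rw [map_one]

lemma psi_rels (huv : s ∩ t ⊆ {v})
    (hedges : ∀ a b, G.Adj a b → (a ∈ s ∧ b ∈ s) ∨ (a ∈ t ∧ b ∈ t)) :
    ∀ r ∈ raagRels G, FreeGroup.lift (psiFun G s t v χ₁ χ₂ hvs hvt hk1 hk2) r = 1 := by
  rintro r ⟨a, b, hab, rfl⟩
  simp only [map_mul, map_inv, FreeGroup.lift_apply_of]
  set f := psiFun G s t v χ₁ χ₂ hvs hvt hk1 hk2 with hf
  suffices h : f a * f b = f b * f a by rw [h]; group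
  rcases hedges a b hab with ⟨ha, hb⟩ | ⟨ha, hb⟩
  · rw [hf, psiFun_mem_s G s t v χ₁ χ₂ hvs hvt hk1 hk2 ha,
      psiFun_mem_s G s t v χ₁ χ₂ hvs hvt hk1 hk2 hb,
      SemidirectProduct.mul_def, SemidirectProduct.mul_def]
    dsimp only
    congr 1
    rw [bbφ_inl, bbφ_inl, ← map_mul, ← map_mul]
    congr 1
    apply Subtype.ext
    simp only [Subgroup.coe_mul, MulAut.conjNormal_apply, toAdd_ofAdd, zpow_one]
    have hc : RAAG.gen (G.induce s) ⟨a, ha⟩ * RAAG.gen (G.induce s) ⟨b, hb⟩ =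
        RAAG.gen (G.induce s) ⟨b, hb⟩ * RAAG.gen (G.induce s) ⟨a, ha⟩ :=
      gen_comm (G.induce s) hab
    set A := RAAG.gen (G.induce s) ⟨a, ha⟩
    set B := RAAG.gen (G.induce s) ⟨b, hb⟩
    set w := RAAG.gen (G.induce s) ⟨v, hvs⟩
    calc A * w⁻¹ * (w * (B * w⁻¹) * w⁻¹) = A * B * (w⁻¹ * w⁻¹) := by group
      _ = B * A * (w⁻¹ * w⁻¹) := by rw [hc]
      _ = B * w⁻¹ * (w * (A * w⁻¹) * w⁻¹) := by group
  · rw [hf, psiFun_mem_t G s t v χ₁ χ₂ hvs hvt hk1 hk2 huv ha,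
      psiFun_mem_t G s t v χ₁ χ₂ hvs hvt hk1 hk2 huv hb,
      SemidirectProduct.mul_def, SemidirectProduct.mul_def]
    dsimp only
    congr 1
    rw [bbφ_inr, bbφ_inr, ← map_mul, ← map_mul]
    congr 1
    apply Subtype.ext
    simp only [Subgroup.coe_mul, MulAut.conjNormal_apply, toAdd_ofAdd, zpow_one]
    have hc : RAAG.gen (G.induce t) ⟨a, ha⟩ * RAAG.gen (G.induce t) ⟨b, hb⟩ =
        RAAG.gen (G.induce t) ⟨b, hb⟩ * RAAG.gen (G.induce t) ⟨a, ha⟩ :=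
      gen_comm (G.induce t) hab
    set A := RAAG.gen (G.induce t) ⟨a, ha⟩
    set B := RAAG.gen (G.induce t) ⟨b, hb⟩
    set w := RAAG.gen (G.induce t) ⟨v, hvt⟩
    calc A * w⁻¹ * (w * (B * w⁻¹) * w⁻¹) = A * B * (w⁻¹ * w⁻¹) := by group
      _ = B * A * (w⁻¹ * w⁻¹) := by rw [hc]
      _ = B * w⁻¹ * (w * (A * w⁻¹) * w⁻¹) := by group

/-- Inclusion of the first kernel into `RAAG G`. -/
def hIncl₁ : ↥χ₁.ker →* RAAG G := (raagIncl G s).comp χ₁.ker.subtype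

def hIncl₂ : ↥χ₂.ker →* RAAG G := (raagIncl G t).comp χ₂.ker.subtype

lemma theta_compat : ∀ g : Multiplicative ℤ,
    (Coprod.lift (hIncl₁ G s χ₁) (hIncl₂ G t χ₂)).comp
        ((bbφ G s t v χ₁ χ₂ hvs hvt g)).toMonoidHom =
      (MulAut.conj (zpowersHom (RAAG G) (RAAG.gen G v) g)).toMonoidHom.comp
        (Coprod.lift (hIncl₁ G s χ₁) (hIncl₂ G t χ₂)) := by
  intro g
  apply Coprod.hom_ext
  · ext k
    simp only [MonoidHom.comp_apply, MulEquiv.coe_toMonoidHom, Coprod.lift_apply_inl,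
      MulAut.conj_apply, zpowersHom_apply]
    rw [bbφ_inl, Coprod.lift_apply_inl]
    show hIncl₁ G s χ₁ _ = _ * hIncl₁ G s χ₁ k * _
    unfold hIncl₁
    simp only [MonoidHom.comp_apply, Subgroup.coe_subtype]
    rw [MulAut.conjNormal_apply]
    simp only [map_mul, map_inv, map_zpow, raagIncl_gen]
  · ext k
    simp only [MonoidHom.comp_apply, MulEquiv.coe_toMonoidHom, Coprod.lift_apply_inr,
      MulAut.conj_apply, zpowersHom_apply]
    rw [bbφ_inr, Coprod.lift_apply_inr]
    show hIncl₂ G t χ₂ _ = _ * hIncl₂ G t χ₂ k * _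
    unfold hIncl₂
    simp only [MonoidHom.comp_apply, Subgroup.coe_subtype]
    rw [MulAut.conjNormal_apply]
    simp only [map_mul, map_inv, map_zpow, raagIncl_gen]

/-- The homomorphism from the semidirect product back to `RAAG G`. -/
def Theta : (Coprod ↥χ₁.ker ↥χ₂.ker ⋊[bbφ G s t v χ₁ χ₂ hvs hvt] Multiplicative ℤ) →* RAAG G :=
  SemidirectProduct.lift (Coprod.lift (hIncl₁ G s χ₁) (hIncl₂ G t χ₂))
    (zpowersHom (RAAG G) (RAAG.gen G v)) (theta_compat G s t v χ₁ χ₂ hvs hvt)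

/-- The homomorphism from `RAAG G` to the semidirect product. -/
noncomputable def Psi (huv : s ∩ t ⊆ {v})
    (hedges : ∀ a b, G.Adj a b → (a ∈ s ∧ b ∈ s) ∨ (a ∈ t ∧ b ∈ t)) :
    RAAG G →* (Coprod ↥χ₁.ker ↥χ₂.ker ⋊[bbφ G s t v χ₁ χ₂ hvs hvt] Multiplicative ℤ) :=
  PresentedGroup.toGroup (psi_rels G s t v χ₁ χ₂ hvs hvt hk1 hk2 huv hedges)
lemma mult_int_aux (x : Multiplicative ℤ) : x * (ofAdd (1 : ℤ)) ^ (-x.toAdd) = 1 := by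
  refine Multiplicative.toAdd.injective ?_
  simp [toAdd_zpow]

lemma Psi_gen (huv : s ∩ t ⊆ {v})
    (hedges : ∀ a b, G.Adj a b → (a ∈ s ∧ b ∈ s) ∨ (a ∈ t ∧ b ∈ t)) (u : V) :
    Psi G s t v χ₁ χ₂ hvs hvt hk1 hk2 huv hedges (RAAG.gen G u) =
      psiFun G s t v χ₁ χ₂ hvs hvt hk1 hk2 u :=
  PresentedGroup.toGroup.of _

/-- Auxiliary homomorphism computing `Psi ∘ raagIncl` on the first factor. -/
noncomputable def beta1 : RAAG (G.induce s) →*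
    (Coprod ↥χ₁.ker ↥χ₂.ker ⋊[bbφ G s t v χ₁ χ₂ hvs hvt] Multiplicative ℤ) :=
  MonoidHom.mk' (fun g =>
    ⟨Coprod.inl ⟨g * (RAAG.gen (G.induce s) ⟨v, hvs⟩) ^ (-(χ₁ g).toAdd), by
      rw [MonoidHom.mem_ker, map_mul, map_zpow, hk1]
      exact mult_int_aux (χ₁ g)⟩, χ₁ g⟩)
    (fun g h => by
      rw [SemidirectProduct.mul_def]
      dsimp only
      congr 1
      · rw [bbφ_inl]
        refine (congrArg Coprod.inl ?_).trans (map_mul _ _ _)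
        apply Subtype.ext
        simp only [Subgroup.coe_mul, MulAut.conjNormal_apply]
        rw [map_mul χ₁, toAdd_mul]
        set w := RAAG.gen (G.induce s) ⟨v, hvs⟩
        group
      · rw [map_mul])

/-- Auxiliary homomorphism computing `Psi ∘ raagIncl` on the second factor. -/
noncomputable def beta2 : RAAG (G.induce t) →*
    (Coprod ↥χ₁.ker ↥χ₂.ker ⋊[bbφ G s t v χ₁ χ₂ hvs hvt] Multiplicative ℤ) :=
  MonoidHom.mk' (fun g =>
    ⟨Coprod.inr ⟨g * (RAAG.gen (G.induce t) ⟨v, hvt⟩) ^ (-(χ₂ g).toAdd), by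
      rw [MonoidHom.mem_ker, map_mul, map_zpow, hk2]
      exact mult_int_aux (χ₂ g)⟩, χ₂ g⟩)
    (fun g h => by
      rw [SemidirectProduct.mul_def]
      dsimp only
      congr 1
      · rw [bbφ_inr]
        refine (congrArg Coprod.inr ?_).trans (map_mul _ _ _)
        apply Subtype.ext
        simp only [Subgroup.coe_mul, MulAut.conjNormal_apply]
        rw [map_mul χ₂, toAdd_mul]
        set w := RAAG.gen (G.induce t) ⟨v, hvt⟩
        group
      · rw [map_mul])

lemma psi_comp_incl₁ (huv : s ∩ t ⊆ {v})
    (hedges : ∀ a b, G.Adj a b → (a ∈ s ∧ b ∈ s) ∨ (a ∈ t ∧ b ∈ t)) :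
    (Psi G s t v χ₁ χ₂ hvs hvt hk1 hk2 huv hedges).comp (raagIncl G s) =
      beta1 G s t v χ₁ χ₂ hvs hvt hk1 := by
  apply raag_hom_ext_s16
  intro u
  simp only [MonoidHom.comp_apply]
  rw [raagIncl_gen, Psi_gen, psiFun_mem_s G s t v χ₁ χ₂ hvs hvt hk1 hk2 u.2]
  unfold beta1
  rw [MonoidHom.mk'_apply]
  congr 1
  · congr 1
    apply Subtype.ext
    show RAAG.gen (G.induce s) ⟨u.1, u.2⟩ * (RAAG.gen (G.induce s) ⟨v, hvs⟩)⁻¹ =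
      RAAG.gen (G.induce s) u * (RAAG.gen (G.induce s) ⟨v, hvs⟩) ^ (-(χ₁ (RAAG.gen (G.induce s) u)).toAdd)
    rw [hk1 u]
    simp only [toAdd_ofAdd, zpow_neg, zpow_one]
  · rw [hk1 u]

lemma psi_comp_incl₂ (huv : s ∩ t ⊆ {v})
    (hedges : ∀ a b, G.Adj a b → (a ∈ s ∧ b ∈ s) ∨ (a ∈ t ∧ b ∈ t)) :
    (Psi G s t v χ₁ χ₂ hvs hvt hk1 hk2 huv hedges).comp (raagIncl G t) =
      beta2 G s t v χ₁ χ₂ hvs hvt hk2 := by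
  apply raag_hom_ext_s16
  intro u
  simp only [MonoidHom.comp_apply]
  rw [raagIncl_gen, Psi_gen, psiFun_mem_t G s t v χ₁ χ₂ hvs hvt hk1 hk2 huv u.2]
  unfold beta2
  rw [MonoidHom.mk'_apply]
  congr 1
  · congr 1
    apply Subtype.ext
    show RAAG.gen (G.induce t) ⟨u.1, u.2⟩ * (RAAG.gen (G.induce t) ⟨v, hvt⟩)⁻¹ =
      RAAG.gen (G.induce t) u * (RAAG.gen (G.induce t) ⟨v, hvt⟩) ^ (-(χ₂ (RAAG.gen (G.induce t) u)).toAdd)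
    rw [hk2 u]
    simp only [toAdd_ofAdd, zpow_neg, zpow_one]
  · rw [hk2 u]

lemma Psi_incl_ker₁ (huv : s ∩ t ⊆ {v})
    (hedges : ∀ a b, G.Adj a b → (a ∈ s ∧ b ∈ s) ∨ (a ∈ t ∧ b ∈ t)) (k : ↥χ₁.ker) :
    Psi G s t v χ₁ χ₂ hvs hvt hk1 hk2 huv hedges (hIncl₁ G s χ₁ k) =
      SemidirectProduct.inl (Coprod.inl k) := by
  have h := DFunLike.congr_fun (psi_comp_incl₁ G s t v χ₁ χ₂ hvs hvt hk1 hk2 huv hedges)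
    (k : RAAG (G.induce s))
  simp only [MonoidHom.comp_apply] at h
  rw [show raagIncl G s (k : RAAG (G.induce s)) = hIncl₁ G s χ₁ k from rfl] at h
  rw [h]
  unfold beta1
  rw [MonoidHom.mk'_apply]
  have hkk : χ₁ (k : RAAG (G.induce s)) = 1 := k.2
  show _ = (⟨Coprod.inl k, 1⟩ : _ ⋊[bbφ G s t v χ₁ χ₂ hvs hvt] Multiplicative ℤ)
  ext
  · dsimp only
    refine congrArg Coprod.inl (Subtype.ext ?_)
    show (k : RAAG (G.induce s)) * _ ^ (-(χ₁ (k : RAAG (G.induce s))).toAdd) =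
      (k : RAAG (G.induce s))
    rw [hkk]
    simp
  · exact hkk

lemma Psi_incl_ker₂ (huv : s ∩ t ⊆ {v})
    (hedges : ∀ a b, G.Adj a b → (a ∈ s ∧ b ∈ s) ∨ (a ∈ t ∧ b ∈ t)) (k : ↥χ₂.ker) :
    Psi G s t v χ₁ χ₂ hvs hvt hk1 hk2 huv hedges (hIncl₂ G t χ₂ k) =
      SemidirectProduct.inl (Coprod.inr k) := by
  have h := DFunLike.congr_fun (psi_comp_incl₂ G s t v χ₁ χ₂ hvs hvt hk1 hk2 huv hedges)
    (k : RAAG (G.induce t))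
  simp only [MonoidHom.comp_apply] at h
  rw [show raagIncl G t (k : RAAG (G.induce t)) = hIncl₂ G t χ₂ k from rfl] at h
  rw [h]
  unfold beta2
  rw [MonoidHom.mk'_apply]
  have hkk : χ₂ (k : RAAG (G.induce t)) = 1 := k.2
  show _ = (⟨Coprod.inr k, 1⟩ : _ ⋊[bbφ G s t v χ₁ χ₂ hvs hvt] Multiplicative ℤ)
  ext
  · dsimp only
    refine congrArg Coprod.inr (Subtype.ext ?_)
    show (k : RAAG (G.induce t)) * _ ^ (-(χ₂ (k : RAAG (G.induce t))).toAdd) =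
      (k : RAAG (G.induce t))
    rw [hkk]
    simp
  · exact hkk

lemma theta_mk (n : Coprod ↥χ₁.ker ↥χ₂.ker) (g : Multiplicative ℤ) :
    Theta G s t v χ₁ χ₂ hvs hvt ⟨n, g⟩ =
      Coprod.lift (hIncl₁ G s χ₁) (hIncl₂ G t χ₂) n * RAAG.gen G v ^ g.toAdd := by
  unfold Theta
  rw [SemidirectProduct.mk_eq_inl_mul_inr, map_mul, SemidirectProduct.lift_inl,
    SemidirectProduct.lift_inr, zpowersHom_apply]

lemma theta_psi (huv : s ∩ t ⊆ {v}) (hmemt : ∀ u, u ∉ s → u ∈ t)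
    (hedges : ∀ a b, G.Adj a b → (a ∈ s ∧ b ∈ s) ∨ (a ∈ t ∧ b ∈ t)) :
    (Theta G s t v χ₁ χ₂ hvs hvt).comp (Psi G s t v χ₁ χ₂ hvs hvt hk1 hk2 huv hedges) =
      MonoidHom.id (RAAG G) := by
  apply raag_hom_ext_s16
  intro u
  simp only [MonoidHom.comp_apply, MonoidHom.id_apply]
  rw [Psi_gen]
  by_cases hu : u ∈ s
  · rw [psiFun_mem_s G s t v χ₁ χ₂ hvs hvt hk1 hk2 hu, theta_mk, Coprod.lift_apply_inl]
    unfold hIncl₁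
    simp only [MonoidHom.comp_apply, Subgroup.coe_subtype, map_mul, map_inv, raagIncl_gen,
      toAdd_ofAdd, zpow_one]
    exact inv_mul_cancel_right _ _
  · rw [psiFun_mem_t G s t v χ₁ χ₂ hvs hvt hk1 hk2 huv (hmemt u hu), theta_mk,
      Coprod.lift_apply_inr]
    unfold hIncl₂
    simp only [MonoidHom.comp_apply, Subgroup.coe_subtype, map_mul, map_inv, raagIncl_gen,
      toAdd_ofAdd, zpow_one]
    exact inv_mul_cancel_right _ _

lemma psi_theta (huv : s ∩ t ⊆ {v})
    (hedges : ∀ a b, G.Adj a b → (a ∈ s ∧ b ∈ s) ∨ (a ∈ t ∧ b ∈ t)) :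
    (Psi G s t v χ₁ χ₂ hvs hvt hk1 hk2 huv hedges).comp (Theta G s t v χ₁ χ₂ hvs hvt) =
      MonoidHom.id _ := by
  apply SemidirectProduct.hom_ext
  · apply Coprod.hom_ext
    · refine MonoidHom.ext fun k => ?_
      simp only [MonoidHom.comp_apply, MonoidHom.id_apply]
      have h1 : Theta G s t v χ₁ χ₂ hvs hvt (SemidirectProduct.inl (Coprod.inl k)) =
          hIncl₁ G s χ₁ k := by
        unfold Theta
        rw [SemidirectProduct.lift_inl, Coprod.lift_apply_inl]
      rw [h1, Psi_incl_ker₁]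
    · refine MonoidHom.ext fun k => ?_
      simp only [MonoidHom.comp_apply, MonoidHom.id_apply]
      have h1 : Theta G s t v χ₁ χ₂ hvs hvt (SemidirectProduct.inl (Coprod.inr k)) =
          hIncl₂ G t χ₂ k := by
        unfold Theta
        rw [SemidirectProduct.lift_inl, Coprod.lift_apply_inr]
      rw [h1, Psi_incl_ker₂]
  · apply MonoidHom.ext_mint
    simp only [MonoidHom.comp_apply, MonoidHom.id_apply]
    have h1 : Theta G s t v χ₁ χ₂ hvs hvt (SemidirectProduct.inr (ofAdd 1)) = RAAG.gen G v := by
      unfold Theta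
      rw [SemidirectProduct.lift_inr, zpowersHom_apply, toAdd_ofAdd, zpow_one]
    rw [h1, Psi_gen, psiFun_v]
    rfl

lemma rightHom_psi (huv : s ∩ t ⊆ {v}) (hmemt : ∀ u, u ∉ s → u ∈ t)
    (hedges : ∀ a b, G.Adj a b → (a ∈ s ∧ b ∈ s) ∨ (a ∈ t ∧ b ∈ t))
    (χ : RAAG G →* Multiplicative ℤ) (hχ : ∀ u, χ (RAAG.gen G u) = ofAdd 1) :
    SemidirectProduct.rightHom.comp (Psi G s t v χ₁ χ₂ hvs hvt hk1 hk2 huv hedges) = χ := by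
  apply raag_hom_ext_s16
  intro u
  simp only [MonoidHom.comp_apply]
  rw [Psi_gen, hχ u]
  by_cases hu : u ∈ s
  · rw [psiFun_mem_s G s t v χ₁ χ₂ hvs hvt hk1 hk2 hu]; rfl
  · rw [psiFun_mem_t G s t v χ₁ χ₂ hvs hvt hk1 hk2 huv (hmemt u hu)]; rfl

end Main

/-- if `Γ` is the connected sum of two finite connected graphs
`Γ₁ = Γ.induce s` and `Γ₂ = Γ.induce t` glued at the single common vertex `v`, then
the Bestvina–Brady group of `Γ` is the free product of the Bestvina–Brady groups of
`Γ₁` and `Γ₂`. -/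
theorem stmt16 {V : Type} [Finite V] (G : SimpleGraph V) (s t : Set V) (v : V)
    (hst : s ∩ t = {v}) (hun : s ∪ t = Set.univ)
    (hedges : ∀ a b, G.Adj a b → (a ∈ s ∧ b ∈ s) ∨ (a ∈ t ∧ b ∈ t))
    (h1 : (G.induce s).Connected) (h2 : (G.induce t).Connected)
    (χ : RAAG G →* Multiplicative ℤ)
    (hχ : ∀ u, χ (RAAG.gen G u) = Multiplicative.ofAdd 1)
    (χ₁ : RAAG (G.induce s) →* Multiplicative ℤ)
    (hχ₁ : ∀ u, χ₁ (RAAG.gen (G.induce s) u) = Multiplicative.ofAdd 1)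
    (χ₂ : RAAG (G.induce t) →* Multiplicative ℤ)
    (hχ₂ : ∀ u, χ₂ (RAAG.gen (G.induce t) u) = Multiplicative.ofAdd 1) :
    Nonempty (↥χ.ker ≃* Monoid.Coprod ↥χ₁.ker ↥χ₂.ker) := by
  have hv : v ∈ s ∩ t := by rw [hst]; rfl
  have hvs : v ∈ s := hv.1
  have hvt : v ∈ t := hv.2
  have huv : s ∩ t ⊆ {v} := le_of_eq hst
  have hmemt : ∀ u, u ∉ s → u ∈ t := by
    intro u hu
    have : u ∈ s ∪ t := by rw [hun]; trivial
    rcases this with h | h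
    · exact absurd h hu
    · exact h
  set Ψ := Psi G s t v χ₁ χ₂ hvs hvt hχ₁ hχ₂ huv hedges with hΨ
  set Θ := Theta G s t v χ₁ χ₂ hvs hvt with hΘ
  have hTP : Θ.comp Ψ = MonoidHom.id _ :=
    theta_psi G s t v χ₁ χ₂ hvs hvt hχ₁ hχ₂ huv hmemt hedges
  have hPT : Ψ.comp Θ = MonoidHom.id _ :=
    psi_theta G s t v χ₁ χ₂ hvs hvt hχ₁ hχ₂ huv hedges
  set Φ := MonoidHom.toMulEquiv Ψ Θ hTP hPT with hΦ
  have hchi : SemidirectProduct.rightHom.comp Ψ = χ :=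
    rightHom_psi G s t v χ₁ χ₂ hvs hvt hχ₁ hχ₂ huv hmemt hedges χ hχ
  have hker : χ.ker.map (Φ : RAAG G →* _) =
      (SemidirectProduct.rightHom :
        _ ⋊[bbφ G s t v χ₁ χ₂ hvs hvt] Multiplicative ℤ →* Multiplicative ℤ).ker := by
    ext x
    simp only [Subgroup.mem_map, MonoidHom.mem_ker]
    constructor
    · rintro ⟨y, hy, rfl⟩
      have : SemidirectProduct.rightHom (Ψ y) = χ y := by rw [← hchi]; rfl
      rw [show ((Φ : RAAG G →* _) y) = Ψ y from rfl, this, hy]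
    · intro hx
      refine ⟨Φ.symm x, ?_, Φ.apply_symm_apply x⟩
      have h1 : Ψ (Φ.symm x) = Φ (Φ.symm x) := rfl
      have h2 : χ (Φ.symm x) = SemidirectProduct.rightHom (Ψ (Φ.symm x)) := by
        rw [← hchi]; rfl
      rw [h2, h1, Φ.apply_symm_apply, hx]
  exact ⟨((Φ.subgroupMap χ.ker).trans (MulEquiv.subgroupCongr hker)).trans
    (((MulEquiv.subgroupCongr SemidirectProduct.range_inl_eq_ker_rightHom).symm).trans
      (MonoidHom.ofInjective SemidirectProduct.inl_injective).symm)⟩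
end
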